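/- If f(x) = p(x²) + x·q(x²) is a stable real polynomial, then every nontrivial real linear combination λ·p(−x²) + μ·x·q(−x²) (with (λ,μ) ≠ (0,0)) has only simple roots. -/

import Mathlib

open Polynomial

open Complex


private lemma key_abs {a z : ℂ} (ha : 0 < a.im) (hz : 0 < z.im) :
    ‖z - a‖ < ‖(starRingEnd ℂ) z - a‖ := by
  have h1 : ‖z - a‖ ^ 2 < ‖(starRingEnd ℂ) z - a‖ ^ 2 := by
    rw [Complex.sq_norm, Complex.sq_norm, Complex.normSq_apply, Complex.normSq_apply]
    simp only [Complex.sub_re, Complex.sub_im, Complex.conj_re, Complex.conj_im]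
    nlinarith
  exact lt_of_pow_lt_pow_left₀ 2 (norm_nonneg _) h1

private lemma L1 : ∀ n : ℕ, ∀ G : ℂ[X], G.natDegree ≤ n →
    (∀ w : ℂ, G.eval w = 0 → 0 < w.im) → 0 < G.natDegree →
    ∀ z : ℂ, 0 < z.im →
    ‖G.eval z‖ < ‖G.eval ((starRingEnd ℂ) z)‖ := by
  intro n
  induction n with
  | zero => intro G hle _ hdeg; omega
  | succ n ih =>
    intro G hle hroots hdeg z hz
    have hG0 : G ≠ 0 := by rintro rfl; simp at hdeg
    obtain ⟨a, ha⟩ := Complex.exists_root (natDegree_pos_iff_degree_pos.mp hdeg)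
    have haim : 0 < a.im := hroots a ha
    obtain ⟨H, hH⟩ := (dvd_iff_isRoot).mpr ha
    have hXa : (X - C a : ℂ[X]) ≠ 0 := X_sub_C_ne_zero a
    have hHne : H ≠ 0 := by rintro rfl; simp at hH; exact hG0 hH
    have hdegH : G.natDegree = 1 + H.natDegree := by
      rw [hH, natDegree_mul hXa hHne, natDegree_X_sub_C]
    have hHroots : ∀ w : ℂ, H.eval w = 0 → 0 < w.im := by
      intro w hw
      exact hroots w (by rw [hH]; simp [hw])
    have hcz : ((starRingEnd ℂ) z).im < 0 := by simp [hz]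
    have hHcz : H.eval ((starRingEnd ℂ) z) ≠ 0 := fun h => absurd (hHroots _ h) (by linarith)
    have heval : ∀ w : ℂ, G.eval w = (w - a) * H.eval w := by intro w; rw [hH]; simp
    rw [heval, heval, norm_mul, norm_mul]
    rcases Nat.eq_zero_or_pos H.natDegree with h0 | hpos
    · have : ‖H.eval z‖ = ‖H.eval ((starRingEnd ℂ) z)‖ := by
        rw [eq_C_of_natDegree_eq_zero h0]; simp
      rw [this]
      apply mul_lt_mul_of_pos_right (key_abs haim hz)
      simpa using hHcz
    · have ihH := ih H (by omega) hHroots hpos z hz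
      exact mul_lt_mul'' (key_abs haim hz) ihH (norm_nonneg _) (norm_nonneg _)

private lemma L2 : ∀ n : ℕ, ∀ G : ℂ[X], G.natDegree ≤ n →
    (∀ w : ℂ, G.eval w = 0 → 0 < w.im) → 0 < G.natDegree →
    ∀ z : ℂ, z.im = 0 → G.eval z ≠ 0 →
    0 < (G.derivative.eval z * (starRingEnd ℂ) (G.eval z)).im := by
  intro n
  induction n with
  | zero => intro G hle _ hdeg; omega
  | succ n ih =>
    intro G hle hroots hdeg z hz hGz
    have hG0 : G ≠ 0 := by rintro rfl; simp at hdeg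
    obtain ⟨a, ha⟩ := Complex.exists_root (natDegree_pos_iff_degree_pos.mp hdeg)
    have haim : 0 < a.im := hroots a ha
    obtain ⟨H, hH⟩ := (dvd_iff_isRoot).mpr ha
    have hXa : (X - C a : ℂ[X]) ≠ 0 := X_sub_C_ne_zero a
    have hHne : H ≠ 0 := by rintro rfl; simp at hH; exact hG0 hH
    have hdegH : G.natDegree = 1 + H.natDegree := by
      rw [hH, natDegree_mul hXa hHne, natDegree_X_sub_C]
    have hHroots : ∀ w : ℂ, H.eval w = 0 → 0 < w.im := by
      intro w hw; exact hroots w (by rw [hH]; simp [hw])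
    have hevalG : G.eval z = (z - a) * H.eval z := by rw [hH]; simp
    have hHz : H.eval z ≠ 0 := by
      intro h; exact hGz (by rw [hevalG, h, mul_zero])
    have hder : G.derivative = H + (X - C a) * H.derivative := by
      rw [hH, derivative_mul]; simp
    set u := H.eval z with hu
    set v := H.derivative.eval z with hv
    set w := z - a with hw
    have hderev : G.derivative.eval z = u + w * v := by rw [hder]; simp [hu, hv, hw]
    have hsplit : (u + w * v) * (starRingEnd ℂ) (w * u)
        = ((normSq u : ℂ)) * (starRingEnd ℂ) w + ((normSq w : ℂ)) * (v * (starRingEnd ℂ) u) := by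
      rw [← Complex.mul_conj, ← Complex.mul_conj, map_mul]; ring
    have him : (G.derivative.eval z * (starRingEnd ℂ) (G.eval z)).im
        = normSq u * (a.im - z.im) + normSq w * (v * (starRingEnd ℂ) u).im := by
      rw [hderev, hevalG, hsplit]
      simp only [Complex.add_im, Complex.mul_im, Complex.ofReal_re, Complex.ofReal_im,
        Complex.conj_im, Complex.sub_im, hw]
      ring
    rw [him, hz, sub_zero]
    have hnu : 0 < normSq u := normSq_pos.mpr hHz
    rcases Nat.eq_zero_or_pos H.natDegree with h0 | hpos
    · have : H.derivative = 0 := by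
        rw [eq_C_of_natDegree_eq_zero h0]; simp
      rw [hv, this]
      simp
      positivity
    · have ihH := ih H (by omega) hHroots hpos z hz hHz
      have hwne : w ≠ 0 := by
        intro h
        have : z = a := by rw [hw] at h; linear_combination h
        rw [this] at hz; linarith
      have hnw : 0 < normSq w := normSq_pos.mpr hwne
      have := mul_pos hnw ihH
      nlinarith

theorem stmt4 (f p q : Polynomial ℝ)
    (hdec : f = p.comp (Polynomial.X ^ 2) + Polynomial.X * q.comp (Polynomial.X ^ 2))
    (hstab : ∀ z : ℂ, Polynomial.aeval z f = 0 → z.re < 0) :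
    ∀ lam mu : ℝ, (lam, mu) ≠ (0, 0) →
      ∀ z : ℂ,
        ((lam • p.comp (-(Polynomial.X ^ 2)) +
            mu • (Polynomial.X * q.comp (-(Polynomial.X ^ 2)))).map
          (algebraMap ℝ ℂ)).rootMultiplicity z ≤ 1 := by
  intro lam mu hlm z
  by_contra hcon
  push_neg at hcon
  set K := algebraMap ℝ ℂ with hK
  set fC := f.map K with hfC
  set G := fC.comp (C Complex.I * X) with hGdef
  set Gb := fC.comp (C (-Complex.I) * X) with hGbdef
  set hC := ((lam • p.comp (-(X ^ 2)) + mu • (X * q.comp (-(X ^ 2)))).map K) with hhC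
  set α : ℂ := (↑lam - ↑mu * Complex.I) / 2 with hαdef
  set β : ℂ := (↑lam + ↑mu * Complex.I) / 2 with hβdef
  -- basic eval facts
  have hevalmap : ∀ (g : ℝ[X]) (w : ℂ), (g.map K).eval w = aeval w g := by
    intro g w; rw [hK, eval_map, aeval_def]
  -- the identity hC = C α * G + C β * Gb
  have hsq1 : ((C Complex.I * X : ℂ[X]))^2 = -(X^2) := by
    rw [mul_pow, ← C_pow, Complex.I_sq]; simp
  have hsq2 : ((C (-Complex.I) * X : ℂ[X]))^2 = -(X^2) := by
    rw [mul_pow, ← C_pow]; norm_num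
  set A : ℂ[X] := (p.map K).comp (-(X^2)) with hA
  set B : ℂ[X] := (q.map K).comp (-(X^2)) with hB
  have hfCdec : fC = (p.map K).comp (X^2) + X * (q.map K).comp (X^2) := by
    rw [hfC, hdec]
    simp [Polynomial.map_add, Polynomial.map_mul, Polynomial.map_comp, Polynomial.map_pow]
  have hGA : G = A + C Complex.I * (X * B) := by
    rw [hGdef, hfCdec, add_comp, mul_comp, X_comp, comp_assoc, comp_assoc,
      pow_comp, X_comp, hsq1, hA, hB]
    ring
  have hGbA : Gb = A - C Complex.I * (X * B) := by
    rw [hGbdef, hfCdec, add_comp, mul_comp, X_comp, comp_assoc, comp_assoc,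
      pow_comp, X_comp, hsq2, hA, hB, map_neg]
    ring
  have hCform : hC = C ((lam : ℂ)) * A + C ((mu : ℂ)) * (X * B) := by
    rw [hhC, smul_eq_C_mul, smul_eq_C_mul]
    simp only [Polynomial.map_add, Polynomial.map_mul, Polynomial.map_comp, map_C,
      Polynomial.map_neg, Polynomial.map_pow, map_X]
    rw [hA, hB]
    simp only [hK, Complex.coe_algebraMap]
  have hsum : C α + C β = C (↑lam : ℂ) := by
    rw [← C_add]; congr 1; rw [hαdef, hβdef]; ring
  have hdiff : (C α - C β) * C Complex.I = C (↑mu : ℂ) := by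
    rw [← C_sub, ← C_mul]; congr 1; rw [hαdef, hβdef]
    linear_combination (-(↑mu : ℂ)) * Complex.I_sq
  have hid : hC = C α * G + C β * Gb := by
    rw [hCform, hGA, hGbA]
    linear_combination (A : ℂ[X]) * hsum.symm + (X * B : ℂ[X]) * hdiff.symm
  -- roots of G are in the upper half plane
  have hGeval : ∀ w : ℂ, G.eval w = aeval (Complex.I * w) f := by
    intro w; rw [hGdef, eval_comp]; simp [hevalmap f]; exact hevalmap f _
  have hGroots : ∀ w : ℂ, G.eval w = 0 → 0 < w.im := by
    intro w hw
    rw [hGeval] at hw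
    have := hstab _ hw
    simp only [Complex.mul_re, Complex.I_re, Complex.I_im, zero_mul, one_mul,
      zero_sub] at this
    linarith
  -- conjugation facts
  have hGbeval : ∀ w : ℂ, Gb.eval w = (starRingEnd ℂ) (G.eval ((starRingEnd ℂ) w)) := by
    intro w
    rw [hGbdef, eval_comp]
    simp only [eval_mul, eval_C, eval_X]
    rw [hevalmap f, hGeval, ← Polynomial.aeval_conj]
    congr 1
    simp [Complex.ext_iff]
  -- α ≠ 0 and β = conj α
  have h2α : (↑lam : ℂ) - ↑mu * Complex.I = 2 * α := by rw [hαdef]; ring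
  have hαne : α ≠ 0 := by
    intro h
    rw [h, mul_zero] at h2α
    have hre := congrArg Complex.re h2α
    have him := congrArg Complex.im h2α
    simp [Complex.sub_re, Complex.sub_im, Complex.mul_re, Complex.mul_im,
      Complex.I_re, Complex.I_im] at hre him
    exact hlm (by simp [hre, him])
  have hβconj : β = (starRingEnd ℂ) α := by
    rw [hαdef, hβdef, map_div₀, map_sub, map_mul, Complex.conj_I, Complex.conj_ofReal,
      Complex.conj_ofReal, map_ofNat]
    ring
  have hβne : β ≠ 0 := by rw [hβconj]; simpa using hαne
  -- hC ≠ 0 and its double root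
  have hCne : hC ≠ 0 := by
    intro h; rw [h] at hcon; simp at hcon
  have hdvd : (X - C z)^2 ∣ hC :=
    dvd_trans (pow_dvd_pow _ hcon) (Polynomial.pow_rootMultiplicity_dvd hC z)
  obtain ⟨u, hu⟩ := hdvd
  have hz0 : hC.eval z = 0 := by rw [hu]; simp
  have hz1 : hC.derivative.eval z = 0 := by
    rw [hu, derivative_mul, derivative_pow]; simp
  -- degrees
  have hdeghC : 0 < hC.natDegree := by
    rcases Nat.eq_zero_or_pos hC.natDegree with h0 | h; swap; · exact h
    exact absurd (by rw [eq_C_of_natDegree_eq_zero h0] at hz0 ⊢; simpa using hz0) hCne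
  have hdegCIX : (C Complex.I * X : ℂ[X]).natDegree = 1 :=
    natDegree_C_mul_X _ Complex.I_ne_zero
  have hdegCIX' : (C (-Complex.I) * X : ℂ[X]).natDegree = 1 :=
    natDegree_C_mul_X _ (neg_ne_zero.mpr Complex.I_ne_zero)
  have hdegG : G.natDegree = fC.natDegree := by
    rw [hGdef, natDegree_comp, hdegCIX, mul_one]
  have hdegGb : Gb.natDegree = fC.natDegree := by
    rw [hGbdef, natDegree_comp, hdegCIX', mul_one]
  have hdegGpos : 0 < G.natDegree := by
    have h1 : hC.natDegree ≤ max (C α * G).natDegree (C β * Gb).natDegree := by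
      rw [hid]; exact natDegree_add_le _ _
    have h2 : (C α * G).natDegree ≤ G.natDegree := natDegree_C_mul_le _ _
    have h3 : (C β * Gb).natDegree ≤ Gb.natDegree := natDegree_C_mul_le _ _
    rw [hdegGb, ← hdegG] at h3
    omega
  -- eval equations
  have e0 : α * G.eval z + β * Gb.eval z = 0 := by
    rw [hid] at hz0; simpa using hz0
  have hCder : hC.derivative = C α * G.derivative + C β * Gb.derivative := by
    rw [hid]; simp [derivative_mul]
  have e1 : α * G.derivative.eval z + β * Gb.derivative.eval z = 0 := by
    rw [hCder] at hz1; simpa using hz1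
  -- z is real
  have hzim : z.im = 0 := by
    by_contra hne
    have habs : ‖G.eval z‖ = ‖G.eval ((starRingEnd ℂ) z)‖ := by
      have h1 : α * G.eval z = -(β * Gb.eval z) := by linear_combination e0
      have h2 := congrArg (‖·‖) h1
      rw [norm_mul, norm_neg, norm_mul, hGbeval, hβconj, Complex.norm_conj,
        Complex.norm_conj] at h2
      exact mul_left_cancel₀ (by simpa using hαne) h2
    rcases lt_trichotomy z.im 0 with hlt | h0 | hgt
    · have := L1 G.natDegree G le_rfl hGroots hdegGpos ((starRingEnd ℂ) z)
        (by simpa using (by linarith : 0 < -z.im))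
      rw [Complex.conj_conj, ← habs] at this
      exact lt_irrefl _ this
    · exact hne h0
    · have := L1 G.natDegree G le_rfl hGroots hdegGpos z hgt
      exact absurd habs (ne_of_lt this)
  have hconjz : (starRingEnd ℂ) z = z := Complex.conj_eq_iff_im.mpr hzim
  have hGzne : G.eval z ≠ 0 := by
    intro h
    have := hGroots z h
    rw [hzim] at this; exact lt_irrefl 0 this
  have hGbz : Gb.eval z = (starRingEnd ℂ) (G.eval z) := by rw [hGbeval, hconjz]
  -- derivative conjugation at real z
  have hGbz' : Gb.derivative.eval z = (starRingEnd ℂ) (G.derivative.eval z) := by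
    have hdG : G.derivative = (fC.derivative).comp (C Complex.I * X) * C Complex.I := by
      rw [hGdef, derivative_comp]
      simp
      ring
    have hdGb : Gb.derivative = (fC.derivative).comp (C (-Complex.I) * X) * C (-Complex.I) := by
      rw [hGbdef, derivative_comp]
      simp
      ring
    have hfC' : fC.derivative = (f.derivative).map K := by
      rw [hfC, derivative_map]
    rw [hdG, hdGb, eval_mul, eval_mul, eval_C, eval_C, eval_comp, eval_comp]
    simp only [eval_mul, eval_C, eval_X]
    rw [hfC', hevalmap, hevalmap, map_mul]
    have : (-Complex.I) * z = (starRingEnd ℂ) (Complex.I * z) := by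
      rw [map_mul, Complex.conj_I, hconjz]
    rw [this, Polynomial.aeval_conj, Complex.conj_I]
  -- final contradiction via L2
  have k0 : α * G.eval z + β * (starRingEnd ℂ) (G.eval z) = 0 := by
    rw [← hGbz]; exact e0
  have k1 : α * G.derivative.eval z + β * (starRingEnd ℂ) (G.derivative.eval z) = 0 := by
    rw [← hGbz']; exact e1
  set w : ℂ := G.derivative.eval z * (starRingEnd ℂ) (G.eval z) with hwdef
  have key : α * w = α * (starRingEnd ℂ) w := by
    rw [hwdef, map_mul, Complex.conj_conj]
    linear_combination (starRingEnd ℂ) (G.eval z) * k1 - (starRingEnd ℂ) (G.derivative.eval z) * k0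
  have hwconj : (starRingEnd ℂ) w = w := (mul_left_cancel₀ hαne key).symm
  have hwim : w.im = 0 := Complex.conj_eq_iff_im.mp hwconj
  have := L2 G.natDegree G le_rfl hGroots hdegGpos z hzim hGzne
  rw [← hwdef] at this
  rw [hwim] at this
  exact lt_irrefl 0 this
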